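/- Midpoint inequality, endpoint form: if f : [a,b] → ℝ⁺ is differentiable, a < b, and f* = e^{f'/f} is multiplicatively convex on [a,b] with f* ≥ 1, then f((a+b)/2) · exp((1/(a-b)) ∫_a^b ln f(u) du) ≤ (f*(a) f*(b))^{(b-a)/8}. -/

import Mathlib

open Real intervalIntegral

/-- Auxiliary midpoint estimate at the level of `g = log f`. -/
lemma aux_midpoint (g : ℝ → ℝ) (a b S : ℝ) (hab : a < b)
    (hgc : ContinuousOn g (Set.Icc a b))
    (key : ∀ x ∈ Set.Icc a b, ∀ y ∈ Set.Icc a b, x ≤ y →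
      0 ≤ g y - g x ∧ g y - g x ≤ S * (y - x)) :
    g ((a + b) / 2) + (1 / (a - b)) * ∫ u in a..b, g u ≤ S * ((b - a) / 8) := by
  set m : ℝ := (a + b) / 2 with hmdef
  have hba : (0:ℝ) < b - a := by linarith
  have ham : a ≤ m := by simp only [hmdef]; linarith
  have hmb : m ≤ b := by simp only [hmdef]; linarith
  have hm_mem : m ∈ Set.Icc a b := ⟨ham, hmb⟩
  have hgint1 : IntervalIntegrable g MeasureTheory.volume a m :=
    (hgc.mono (Set.Icc_subset_Icc le_rfl hmb)).intervalIntegrable_of_Icc ham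
  have hgint2 : IntervalIntegrable g MeasureTheory.volume m b :=
    (hgc.mono (Set.Icc_subset_Icc ham le_rfl)).intervalIntegrable_of_Icc hmb
  -- first piece
  have I1 : ∫ u in a..m, (g m - g u) ≤ S * (m - a) ^ 2 / 2 := by
    have hcomp : ∫ u in a..m, (S * (m - u)) = S * (m - a) ^ 2 / 2 := by
      have : ∫ u in a..m, (S * (m - u)) = S * ∫ u in a..m, (m - u) := by
        rw [← intervalIntegral.integral_const_mul]
      rw [this, intervalIntegral.integral_sub _root_.intervalIntegrable_const
        intervalIntegral.intervalIntegrable_id, integral_id, integral_const]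
      simp only [smul_eq_mul]
      ring
    rw [← hcomp]
    apply intervalIntegral.integral_mono_on ham
    · exact _root_.intervalIntegrable_const.sub hgint1
    · exact (continuous_const.mul (continuous_const.sub continuous_id)).intervalIntegrable a m
    · intro u hu
      have hu' : u ∈ Set.Icc a b := ⟨hu.1, hu.2.trans hmb⟩
      exact (key u hu' m hm_mem hu.2).2
  -- second piece
  have I2 : ∫ u in m..b, (g m - g u) ≤ 0 := by
    have : ∫ u in m..b, (g m - g u) ≤ ∫ u in m..b, (0:ℝ) := by
      apply intervalIntegral.integral_mono_on hmb
      · exact _root_.intervalIntegrable_const.sub hgint2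
      · exact _root_.intervalIntegrable_const
      · intro u hu
        have hu' : u ∈ Set.Icc a b := ⟨ham.trans hu.1, hu.2⟩
        have := (key m hm_mem u hu' hu.1).1
        linarith
    simpa using this
  have hsplit : (∫ u in a..m, (g m - g u)) + (∫ u in m..b, (g m - g u)) =
      ∫ u in a..b, (g m - g u) := by
    exact intervalIntegral.integral_add_adjacent_intervals
      (_root_.intervalIntegrable_const.sub hgint1) (_root_.intervalIntegrable_const.sub hgint2)
  have hgint : IntervalIntegrable g MeasureTheory.volume a b :=
    hgc.intervalIntegrable_of_Icc hab.le
  have hval : ∫ u in a..b, (g m - g u) = (b - a) * g m - ∫ u in a..b, g u := by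
    rw [intervalIntegral.integral_sub _root_.intervalIntegrable_const hgint, integral_const]
    simp only [smul_eq_mul]
  have hma : m - a = (b - a) / 2 := by simp only [hmdef]; ring
  have claim : (b - a) * g m - (∫ u in a..b, g u) ≤ S * (b - a) ^ 2 / 8 := by
    rw [← hval, ← hsplit]
    have : S * (m - a) ^ 2 / 2 = S * (b - a) ^ 2 / 8 := by rw [hma]; ring
    linarith [I1, I2, this]
  have e1 : (1:ℝ) / (a - b) = -(1 / (b - a)) := by
    rw [show a - b = -(b - a) by ring, div_neg]
  rw [e1]
  have hne : (b - a) ≠ 0 := ne_of_gt hba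
  calc g m + -(1 / (b - a)) * ∫ u in a..b, g u
      = ((b - a) * g m - ∫ u in a..b, g u) / (b - a) := by field_simp; ring
    _ ≤ (S * (b - a) ^ 2 / 8) / (b - a) := by
        exact div_le_div_of_nonneg_right claim hba.le
    _ = S * ((b - a) / 8) := by field_simp

/-- Midpoint inequality, endpoint form. -/
theorem mul_midpoint_inequality_endpoints (f : ℝ → ℝ) (a b : ℝ) (hab : a < b)
    (hpos : ∀ x ∈ Set.Icc a b, 0 < f x)
    (hdiff : ∀ x ∈ Set.Icc a b, DifferentiableAt ℝ f x)
    (hint : IntervalIntegrable (fun x => deriv f x / f x) MeasureTheory.volume a b)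
    (hconv : ∀ x ∈ Set.Icc a b, ∀ y ∈ Set.Icc a b, ∀ t ∈ Set.Icc (0:ℝ) 1,
      Real.exp (deriv f (t * x + (1 - t) * y) / f (t * x + (1 - t) * y)) ≤
        Real.exp (deriv f x / f x) ^ t * Real.exp (deriv f y / f y) ^ (1 - t))
    (hone : ∀ x ∈ Set.Icc a b, 1 ≤ Real.exp (deriv f x / f x)) :
    f ((a + b) / 2) * Real.exp ((1 / (a - b)) * ∫ u in a..b, Real.log (f u)) ≤
      (Real.exp (deriv f a / f a) * Real.exp (deriv f b / f b)) ^ ((b - a) / 8) := by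
  have ha : a ∈ Set.Icc a b := ⟨le_refl a, hab.le⟩
  have hb : b ∈ Set.Icc a b := ⟨hab.le, le_refl b⟩
  set S : ℝ := deriv f a / f a + deriv f b / f b with hS
  -- derivative of log ∘ f
  have hgd : ∀ x ∈ Set.Icc a b, HasDerivAt (fun z => Real.log (f z)) (deriv f x / f x) x :=
    fun x hx => ((hdiff x hx).hasDerivAt).log (ne_of_gt (hpos x hx))
  have hnn : ∀ x ∈ Set.Icc a b, 0 ≤ deriv f x / f x := by
    intro x hx
    have := hone x hx
    rwa [Real.one_le_exp_iff] at this
  have hbd : ∀ c ∈ Set.Icc a b, deriv f c / f c ≤ S := by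
    intro c hc
    set t : ℝ := (b - c) / (b - a) with ht
    have hba : (0:ℝ) < b - a := by linarith
    have ht0 : 0 ≤ t := div_nonneg (by linarith [hc.2]) hba.le
    have ht1 : t ≤ 1 := by rw [div_le_one hba]; linarith [hc.1]
    have hct : t * a + (1 - t) * b = c := by
      have h := div_mul_cancel₀ (b - c) hba.ne'
      rw [← ht] at h
      linear_combination -h
    have hcv := hconv a ha b hb t ⟨ht0, ht1⟩
    rw [hct, ← Real.exp_mul, ← Real.exp_mul, ← Real.exp_add] at hcv
    have h2 := Real.exp_le_exp.mp hcv
    have hga := hnn a ha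
    have hgb := hnn b hb
    nlinarith [h2, hga, hgb, ht0, ht1]
  have hgc : ContinuousOn (fun z => Real.log (f z)) (Set.Icc a b) :=
    fun x hx => ((hgd x hx).continuousAt).continuousWithinAt
  have key : ∀ x ∈ Set.Icc a b, ∀ y ∈ Set.Icc a b, x ≤ y →
      0 ≤ Real.log (f y) - Real.log (f x) ∧
      Real.log (f y) - Real.log (f x) ≤ S * (y - x) := by
    intro x hx y hy hxy
    rcases eq_or_lt_of_le hxy with rfl | hlt
    · simp
    · obtain ⟨c, hc, hceq⟩ := exists_hasDerivAt_eq_slope (fun z => Real.log (f z))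
        (fun z => deriv f z / f z) hlt
        (hgc.mono (Set.Icc_subset_Icc hx.1 hy.2))
        (fun z hz => hgd z ⟨hx.1.trans hz.1.le, hz.2.le.trans hy.2⟩)
      have hcm : c ∈ Set.Icc a b := ⟨hx.1.trans hc.1.le, hc.2.le.trans hy.2⟩
      have h1 := hnn c hcm
      have h2 := hbd c hcm
      have hyx : (0:ℝ) < y - x := by linarith
      have heq : Real.log (f y) - Real.log (f x) = (deriv f c / f c) * (y - x) := by
        rw [hceq]; field_simp
      constructor
      · rw [heq]; positivity
      · rw [heq]
        exact mul_le_mul_of_nonneg_right h2 hyx.le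
  have main := aux_midpoint (fun z => Real.log (f z)) a b S hab hgc key
  have hpm : 0 < f ((a + b) / 2) :=
    hpos _ ⟨by linarith, by linarith⟩
  calc f ((a + b) / 2) * Real.exp ((1 / (a - b)) * ∫ u in a..b, Real.log (f u))
      = Real.exp (Real.log (f ((a + b) / 2)) + (1 / (a - b)) * ∫ u in a..b, Real.log (f u)) := by
        rw [Real.exp_add, Real.exp_log hpm]
    _ ≤ Real.exp (S * ((b - a) / 8)) := Real.exp_le_exp.mpr main
    _ = (Real.exp (deriv f a / f a) * Real.exp (deriv f b / f b)) ^ ((b - a) / 8) := by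
        rw [← Real.exp_add, ← Real.exp_mul]
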